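/- Let θ be any parameter vector of the original network, let h ∈ {1,…,H_ℓ̂}, and let λ_0,…,λ_K ∈ ℝ satisfy Σ_{i=0}^K λ_i = 1. Then the empirical risk is preserved under the γ embedding: R̂_emp(γ_λ(θ)) = R_emp(θ). -/
import Mathlib


/-- Parameters of a fully connected feedforward network: `w ℓ j i` is the weight from
unit `i` of layer `ℓ-1` to unit `j` of layer `ℓ`, and `b ℓ j` is the bias of unit `j`
of layer `ℓ`.  Layers are numbered `1, …, L` (layer `0` is the input); units within a
layer are numbered from `0`, so layer `ℓ` consists of the units `0, …, H ℓ - 1`. -/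
structure NNParams where
  w : ℕ → ℕ → ℕ → ℝ
  b : ℕ → ℕ → ℝ

/-- `layerOut g H θ x ℓ i` : the output of unit `i` of layer `ℓ` on input `x`
(`layerOut g H θ x 0 = x`, and for `ℓ ≥ 1` it is `g` applied to the pre-activation). -/
noncomputable def layerOut (g : ℝ → ℝ) (H : ℕ → ℕ) (θ : NNParams) (x : ℕ → ℝ) :
    ℕ → ℕ → ℝ
  | 0, i => x i
  | ℓ + 1, i =>
      g (∑ j ∈ Finset.range (H ℓ), θ.w (ℓ + 1) i j * layerOut g H θ x ℓ j + θ.b (ℓ + 1) i)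

/-- Pre-activation `a_j^ℓ(x, θ)` of unit `j` of layer `ℓ ≥ 1`:
`a_j^ℓ = ∑_{i < H (ℓ-1)} w_{ji}^ℓ · (output of unit i of layer ℓ-1) + σ_j^ℓ`.
The outputs of the last layer `L` are `f_r(x,θ) = preact g H θ x L r` (linear output units). -/
noncomputable def preact (g : ℝ → ℝ) (H : ℕ → ℕ) (θ : NNParams) (x : ℕ → ℝ)
    (ℓ j : ℕ) : ℝ :=
  ∑ i ∈ Finset.range (H (ℓ - 1)), θ.w ℓ j i * layerOut g H θ x (ℓ - 1) i + θ.b ℓ j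

/-- Empirical risk `R_emp(θ) = (1/P) ∑_{p<P} ℒ(y^p, f(x^p, θ))`, where the network has
`L` layers with layer sizes given by `H`, the training inputs are `X p` and the labels
`Y p`, and `m` is the output dimension seen by the loss. -/
noncomputable def Remp (g : ℝ → ℝ) (H : ℕ → ℕ) (L P : ℕ) {m : ℕ}
    (X Y : ℕ → ℕ → ℝ) (loss : (ℕ → ℝ) → (Fin m → ℝ) → ℝ) (θ : NNParams) : ℝ :=
  (1 / (P : ℝ)) * ∑ p ∈ Finset.range P,
    loss (Y p) (fun r => preact g H θ (X p) L r)

/-- Layer sizes of the network enlarged by adding `K` new neurons to layer `l`. -/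
def enlargeH (H : ℕ → ℕ) (l K : ℕ) : ℕ → ℕ :=
  fun ℓ => if ℓ = l then H l + K else H ℓ

/-- The embedding `α_{ζv}` : copy all parameters, give the `k`-th new neuron of layer `l`
(`k = 0, …, K-1`, i.e. unit `H l + k`) the bias `ζ k` and incoming weights `v k`, and
set all weights from the new neurons to layer `l+1` to zero. -/
noncomputable def alphaEmb (H : ℕ → ℕ) (l K : ℕ) (ζ : ℕ → ℝ) (v : ℕ → ℕ → ℝ)
    (θ : NNParams) : NNParams where
  w := fun ℓ j i =>
    if ℓ = l ∧ H l ≤ j then v (j - H l) i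
    else if ℓ = l + 1 ∧ H l ≤ i then 0
    else θ.w ℓ j i
  b := fun ℓ j => if ℓ = l ∧ H l ≤ j then ζ (j - H l) else θ.b ℓ j

/-- The embedding `β_{ζs}` : copy all parameters except the biases of layer `l+1`, give
the `k`-th new neuron of layer `l` the bias `ζ k` and zero incoming weights, set the
outgoing weight from the `k`-th new neuron to unit `j` of layer `l+1` to `s j k`, and
replace the bias of unit `j` of layer `l+1` by `σ_j - ∑_{k<K} s j k · g (ζ k)`. -/
noncomputable def betaEmb (g : ℝ → ℝ) (H : ℕ → ℕ) (l K : ℕ) (ζ : ℕ → ℝ)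
    (s : ℕ → ℕ → ℝ) (θ : NNParams) : NNParams where
  w := fun ℓ j i =>
    if ℓ = l ∧ H l ≤ j then 0
    else if ℓ = l + 1 ∧ H l ≤ i then s j (i - H l)
    else θ.w ℓ j i
  b := fun ℓ j =>
    if ℓ = l ∧ H l ≤ j then ζ (j - H l)
    else if ℓ = l + 1 then θ.b (l + 1) j - ∑ k ∈ Finset.range K, s j k * g (ζ k)
    else θ.b ℓ j

/-- The embedding `γ_λ` : duplicate unit `h` of layer `l` into each of the `K` new
neurons (same bias and incoming weights as unit `h`), and split the outgoing weights:
unit `h` keeps `lam 0 · w_{jh}^{l+1}` and the `k`-th new neuron (`k = 0, …, K-1`,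
i.e. unit `H l + k`, corresponding to `λ_{k+1}` of the paper) gets
`lam (k+1) · w_{jh}^{l+1}`; all other parameters are copied. -/
noncomputable def gammaEmb (H : ℕ → ℕ) (l K : ℕ) (h : ℕ) (lam : ℕ → ℝ)
    (θ : NNParams) : NNParams where
  w := fun ℓ j i =>
    if ℓ = l ∧ H l ≤ j then θ.w l h i
    else if ℓ = l + 1 ∧ i = h then lam 0 * θ.w (l + 1) j h
    else if ℓ = l + 1 ∧ H l ≤ i then lam (i - H l + 1) * θ.w (l + 1) j h
    else θ.w ℓ j i
  b := fun ℓ j => if ℓ = l ∧ H l ≤ j then θ.b l h else θ.b ℓ j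

/-- `θ` with the single weight `w ℓ j i` replaced by `t`. -/
noncomputable def updW (θ : NNParams) (ℓ j i : ℕ) (t : ℝ) : NNParams :=
  ⟨fun ℓ' j' i' => if ℓ' = ℓ ∧ j' = j ∧ i' = i then t else θ.w ℓ' j' i', θ.b⟩

/-- `θ` with the single bias `b ℓ j` replaced by `t`. -/
noncomputable def updB (θ : NNParams) (ℓ j : ℕ) (t : ℝ) : NNParams :=
  ⟨θ.w, fun ℓ' j' => if ℓ' = ℓ ∧ j' = j then t else θ.b ℓ' j'⟩

/-- `∇ R_emp(θ) = 0` : every partial derivative of the empirical risk with respect to an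
actual network parameter (a weight `w ℓ j i` or a bias `b ℓ j`, `1 ≤ ℓ ≤ L`, `j < H ℓ`,
`i < H (ℓ-1)`) vanishes at `θ`. -/
def IsCritical (g : ℝ → ℝ) (H : ℕ → ℕ) (L P : ℕ) {m : ℕ}
    (X Y : ℕ → ℕ → ℝ) (loss : (ℕ → ℝ) → (Fin m → ℝ) → ℝ) (θ : NNParams) : Prop :=
  (∀ ℓ j i, 1 ≤ ℓ → ℓ ≤ L → j < H ℓ → i < H (ℓ - 1) →
      deriv (fun t => Remp g H L P X Y loss (updW θ ℓ j i t)) (θ.w ℓ j i) = 0) ∧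
  ∀ ℓ j, 1 ≤ ℓ → ℓ ≤ L → j < H ℓ →
      deriv (fun t => Remp g H L P X Y loss (updB θ ℓ j t)) (θ.b ℓ j) = 0

/-- Layer sizes after enlarging layer `p.1` by `p.2` neurons for each pair in the list. -/
def multiEnlargeH : (ℕ → ℕ) → List (ℕ × ℕ) → (ℕ → ℕ)
  | H, [] => H
  | H, (l, K) :: rest => multiEnlargeH (enlargeH H l K) rest

/-- Composition of `α` embeddings: for each `(l, K)` in the list (in order), add `K` new
neurons to layer `l` via `α` with biases `ζ l` and incoming weights `v l`. -/
noncomputable def multiAlpha (ζ : ℕ → ℕ → ℝ) (v : ℕ → ℕ → ℕ → ℝ) :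
    (ℕ → ℕ) → List (ℕ × ℕ) → NNParams → NNParams
  | _, [], θ => θ
  | H, (l, K) :: rest, θ =>
      multiAlpha ζ v (enlargeH H l K) rest (alphaEmb H l K (ζ l) (v l) θ)

noncomputable def multiBeta (g : ℝ → ℝ) (ζ : ℕ → ℕ → ℝ) (s : ℕ → ℕ → ℕ → ℝ) :
    (ℕ → ℕ) → List (ℕ × ℕ) → NNParams → NNParams
  | _, [], θ => θ
  | H, (l, K) :: rest, θ =>
      multiBeta g ζ s (enlargeH H l K) rest (betaEmb g H l K (ζ l) (s l) θ)

noncomputable def multiGamma (hsel : ℕ → ℕ) (lam : ℕ → ℕ → ℝ) :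
    (ℕ → ℕ) → List (ℕ × ℕ) → NNParams → NNParams
  | _, [], θ => θ
  | H, (l, K) :: rest, θ =>
      multiGamma hsel lam (enlargeH H l K) rest (gammaEmb H l K (hsel l) (lam l) θ)

/-- A single enlargement step: either a `β` embedding with zero outgoing weights, or a
`γ` embedding. -/
inductive EmbStep where
  | beta (l K : ℕ) (ζ : ℕ → ℝ)
  | gamma (l K : ℕ) (h : ℕ) (lam : ℕ → ℝ)

def EmbStep.layer : EmbStep → ℕ
  | .beta l _ _ => l
  | .gamma l _ _ _ => l

def EmbStep.count : EmbStep → ℕ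
  | .beta _ K _ => K
  | .gamma _ K _ _ => K

noncomputable def EmbStep.apply (g : ℝ → ℝ) (H : ℕ → ℕ) (θ : NNParams) : EmbStep → NNParams
  | .beta l K ζ => betaEmb g H l K ζ (fun _ _ => 0) θ
  | .gamma l K h lam => gammaEmb H l K h lam θ

def EmbStep.OK (H : ℕ → ℕ) (L : ℕ) : EmbStep → Prop
  | .beta l _ _ => 1 ≤ l ∧ l + 1 ≤ L
  | .gamma l K h lam => 1 ≤ l ∧ l + 1 ≤ L ∧ h < H l ∧ ∑ i ∈ Finset.range (K + 1), lam i = 1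

noncomputable def applySteps (g : ℝ → ℝ) : (ℕ → ℕ) → List EmbStep → NNParams → NNParams
  | _, [], θ => θ
  | H, st :: rest, θ =>
      applySteps g (enlargeH H st.layer st.count) rest (EmbStep.apply g H θ st)

def stepsH : (ℕ → ℕ) → List EmbStep → (ℕ → ℕ)
  | H, [] => H
  | H, st :: rest => stepsH (enlargeH H st.layer st.count) rest

/-- For every parameter vector `θ`, every unit `h` of layer `l`
(`h < H l`) and coefficients `λ_0, …, λ_K` summing to one, the `γ` embedding preserves
the empirical risk: `R̂_emp(γ_λ(θ)) = R_emp(θ)`. -/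
theorem gammaEmb_preserves_Remp
    (g : ℝ → ℝ) (H : ℕ → ℕ) (L P : ℕ) (X Y : ℕ → ℕ → ℝ)
    (loss : (ℕ → ℝ) → (Fin (H L) → ℝ) → ℝ)
    (l : ℕ) (hl1 : 1 ≤ l) (hlL : l + 1 ≤ L) (K : ℕ)
    (h : ℕ) (hh : h < H l) (lam : ℕ → ℝ)
    (hlam : ∑ i ∈ Finset.range (K + 1), lam i = 1) (θ : NNParams) :
    Remp g (enlargeH H l K) L P X Y loss (gammaEmb H l K h lam θ)
      = Remp g H L P X Y loss θ := by
  set H' := enlargeH H l K with hH'def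
  set θ' := gammaEmb H l K h lam θ with hθ'def
  have hH'ne : ∀ ℓ, ℓ ≠ l → H' ℓ = H ℓ := fun ℓ hne => if_neg hne
  have hH'l : H' l = H l + K := if_pos rfl
  -- weight/bias facts
  have wA : ∀ ℓ j i, ℓ ≠ l → ℓ ≠ l + 1 → θ'.w ℓ j i = θ.w ℓ j i := by
    intro ℓ j i h1 h2
    simp [hθ'def, gammaEmb, h1, h2]
  have bA : ∀ ℓ j, ℓ ≠ l → θ'.b ℓ j = θ.b ℓ j := by
    intro ℓ j h1
    simp [hθ'def, gammaEmb, h1]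
  have wl : ∀ j i, j < H l → θ'.w l j i = θ.w l j i := by
    intro j i hj
    simp [hθ'def, gammaEmb, Nat.not_le.mpr hj, (by omega : l ≠ l + 1)]
  have wl' : ∀ j i, H l ≤ j → θ'.w l j i = θ.w l h i := by
    intro j i hj
    simp [hθ'def, gammaEmb, hj]
  have bl : ∀ j, j < H l → θ'.b l j = θ.b l j := by
    intro j hj
    simp [hθ'def, gammaEmb, Nat.not_le.mpr hj]
  have bl' : ∀ j, H l ≤ j → θ'.b l j = θ.b l h := by
    intro j hj
    simp [hθ'def, gammaEmb, hj]
  have wl1 : ∀ j i, θ'.w (l + 1) j i =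
      if i = h then lam 0 * θ.w (l + 1) j h
      else if H l ≤ i then lam (i - H l + 1) * θ.w (l + 1) j h
      else θ.w (l + 1) j i := by
    intro j i
    simp only [hθ'def, gammaEmb]
    by_cases hih : i = h
    · simp [hih, (by omega : ¬ (l + 1 = l))]
    · by_cases hiH : H l ≤ i
      · simp [hih, hiH, (by omega : ¬ (l + 1 = l))]
      · simp [hih, hiH, (by omega : ¬ (l + 1 = l))]
  have bl1 : ∀ j, θ'.b (l + 1) j = θ.b (l + 1) j := fun j => bA _ j (by omega)
  obtain ⟨m, rfl⟩ : ∃ m, l = m + 1 := ⟨l - 1, by omega⟩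
  -- layers below l are unchanged
  have lemA : ∀ ℓ, ℓ < m + 1 → ∀ (x : ℕ → ℝ) i,
      layerOut g H' θ' x ℓ i = layerOut g H θ x ℓ i := by
    intro ℓ
    induction ℓ with
    | zero => intro _ x i; rfl
    | succ n ih =>
      intro hlt x i
      have hn : n < m + 1 := by omega
      simp only [layerOut]
      rw [hH'ne n (by omega)]
      rw [Finset.sum_congr rfl (fun j _ => by
        rw [ih hn x j, wA (n + 1) i j (by omega) (by omega)]), bA (n + 1) i (by omega)]
  -- layer l
  have lemB : ∀ (x : ℕ → ℝ) j, layerOut g H' θ' x (m + 1) j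
      = layerOut g H θ x (m + 1) (if j < H (m + 1) then j else h) := by
    intro x j
    simp only [layerOut]
    rw [hH'ne m (by omega)]
    by_cases hj : j < H (m + 1)
    · simp only [hj, if_true]
      rw [Finset.sum_congr rfl (fun i _ => by
        rw [lemA m (by omega) x i, wl j i hj]), bl j hj]
    · simp only [hj, if_false]
      rw [Finset.sum_congr rfl (fun i _ => by
        rw [lemA m (by omega) x i, wl' j i (by omega)]), bl' j (by omega)]
  -- auxiliary sum split
  have sumsplit : ∀ (f : ℕ → ℝ) (a b : ℕ),
      ∑ i ∈ Finset.range (a + b), f i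
        = (∑ i ∈ Finset.range a, f i) + ∑ k ∈ Finset.range b, f (a + k) := by
    intro f a b
    induction b with
    | zero => simp
    | succ n ih => rw [← Nat.add_assoc, Finset.sum_range_succ, ih, Finset.sum_range_succ]; ring
  -- pre-activation at layer l + 1
  have lemC : ∀ (x : ℕ → ℝ) j,
      preact g H' θ' x (m + 1 + 1) j = preact g H θ x (m + 1 + 1) j := by
    intro x j
    simp only [preact, Nat.add_sub_cancel]
    rw [hH'l, bl1, sumsplit]
    set c : ℝ := θ.w (m + 1 + 1) j h * layerOut g H θ x (m + 1) h with hc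
    have houth : ∀ i, i < H (m + 1) → layerOut g H' θ' x (m + 1) i = layerOut g H θ x (m + 1) i := by
      intro i hi; rw [lemB x i]; simp [hi]
    have h1 : (∑ i ∈ Finset.range (H (m + 1)), θ'.w (m + 1 + 1) j i * layerOut g H' θ' x (m + 1) i)
        = (∑ i ∈ Finset.range (H (m + 1)), θ.w (m + 1 + 1) j i * layerOut g H θ x (m + 1) i)
          + (lam 0 - 1) * c := by
      have hterm : ∀ i ∈ Finset.range (H (m + 1)), θ'.w (m + 1 + 1) j i * layerOut g H' θ' x (m + 1) i
          = θ.w (m + 1 + 1) j i * layerOut g H θ x (m + 1) i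
            + (if i = h then (lam 0 - 1) * c else 0) := by
        intro i hi
        rw [Finset.mem_range] at hi
        rw [houth i hi, wl1]
        by_cases hih : i = h
        · subst hih; rw [if_pos rfl, if_pos rfl, hc]; ring
        · simp [hih, Nat.not_le.mpr hi]
      rw [Finset.sum_congr rfl hterm, Finset.sum_add_distrib,
        Finset.sum_ite_eq' (Finset.range (H (m + 1))) h fun _ => (lam 0 - 1) * c]
      simp [Finset.mem_range.mpr hh]
    have h2 : (∑ k ∈ Finset.range K, θ'.w (m + 1 + 1) j (H (m + 1) + k) * layerOut g H' θ' x (m + 1) (H (m + 1) + k))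
        = (1 - lam 0) * c := by
      have hterm : ∀ k ∈ Finset.range K, θ'.w (m + 1 + 1) j (H (m + 1) + k) * layerOut g H' θ' x (m + 1) (H (m + 1) + k)
          = lam (k + 1) * c := by
        intro k _
        rw [lemB, wl1]
        have hne : ¬ (H (m + 1) + k = h) := by omega
        have hle : H (m + 1) ≤ H (m + 1) + k := Nat.le_add_right _ _
        simp only [hne, if_false, hle, if_true, Nat.not_lt.mpr hle, Nat.add_sub_cancel_left, hc]
        ring
      rw [Finset.sum_congr rfl hterm, ← Finset.sum_mul]
      have hsum := Finset.sum_range_succ' lam K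
      rw [hlam] at hsum
      have hs : ∑ k ∈ Finset.range K, lam (k + 1) = 1 - lam 0 := by linarith
      rw [hs]
    rw [h1, h2]; ring
  have layer_preact : ∀ (x : ℕ → ℝ) (Hf : ℕ → ℕ) (ψ : NNParams) (k j : ℕ),
      layerOut g Hf ψ x (k + 1) j = g (preact g Hf ψ x (k + 1) j) := by
    intro x Hf ψ k j
    simp [layerOut, preact]
  -- pre-activations at layers ≥ l + 1
  have lemD : ∀ n (x : ℕ → ℝ) j,
      preact g H' θ' x (m + 1 + 1 + n) j = preact g H θ x (m + 1 + 1 + n) j := by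
    intro n
    induction n with
    | zero => exact lemC
    | succ k ih =>
      intro x j
      have harith : m + 1 + 1 + (k + 1) = (m + 1 + 1 + k) + 1 := by omega
      rw [harith]
      simp only [preact, Nat.add_sub_cancel]
      rw [hH'ne (m + 1 + 1 + k) (by omega)]
      congr 1
      · apply Finset.sum_congr rfl
        intro i _
        rw [wA _ _ _ (by omega) (by omega)]
        congr 1
        obtain ⟨k', hk'⟩ : ∃ k', m + 1 + 1 + k = k' + 1 := ⟨m + 1 + k, by omega⟩
        rw [hk', layer_preact, layer_preact, ← hk', ih x i]
      · exact bA _ _ (by omega)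
  -- conclude
  obtain ⟨n, hn⟩ : ∃ n, L = m + 1 + 1 + n := ⟨L - (m + 2), by omega⟩
  simp only [Remp]
  congr 1
  apply Finset.sum_congr rfl
  intro p _
  congr 1
  funext r
  have hD := lemD n (X p) r
  rw [← hn] at hD
  exact hD
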